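/- Let (μ_n)_{n≥1} be a sequence of probability measures on ℝ, each with infinite support and all moments finite, and let x* ∈ ℝ. If (μ_n) satisfies the α-Nevai condition at x* for some α > 0, then (μ_n) satisfies the Nevai condition at x*, i.e. for every continuous compactly supported f : ℝ → ℝ, ∫ (f(y) − f(x*)) K_n(x*,y)²/K_n(x*,x*) dμ_n(y) → 0 as n → ∞. -/

import Mathlib

open MeasureTheory ProbabilityTheory Filter Topology

noncomputable section

/-- The squared Vandermonde determinant `∏_{i>j} (λ_i - λ_j)^2`. -/
def vandSq {n : ℕ} (l : Fin n → ℝ) : ℝ :=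
  ∏ q ∈ Finset.univ.filter (fun q : Fin n × Fin n => q.2 < q.1), (l q.1 - l q.2) ^ 2

/-- The orthogonal polynomial ensemble of size `n` associated with `μ`: the probability
measure on `ℝ^n` proportional to `∏_{i>j}(λ_i-λ_j)^2 dμ(λ_1)⋯dμ(λ_n)`. -/
def OPE (μ : Measure ℝ) (n : ℕ) : Measure (Fin n → ℝ) :=
  ((((Measure.pi fun _ : Fin n => μ).withDensity fun l => ENNReal.ofReal (vandSq l))
    Set.univ)⁻¹) •
    ((Measure.pi fun _ : Fin n => μ).withDensity fun l => ENNReal.ofReal (vandSq l))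

/-- The linear statistic `X_f = ∑ f(λ_j)`. -/
def linStat {n : ℕ} (f : ℝ → ℝ) (l : Fin n → ℝ) : ℝ := ∑ j, f (l j)

/-- The scaled linear statistic `X_{f,α,x*} = ∑ f(n^α (λ_j - x*))`. -/
def scaledLinStat {n : ℕ} (f : ℝ → ℝ) (α xs : ℝ) (l : Fin n → ℝ) : ℝ :=
  ∑ j, f ((n : ℝ) ^ α * (l j - xs))

/-- `p` is the family of orthonormal polynomials of `μ`: `p j` has degree `j`, positive
leading coefficient, and `∫ p_i p_j dμ = δ_{ij}`. -/
def IsOrthonormalPolys (μ : Measure ℝ) (p : ℕ → Polynomial ℝ) : Prop :=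
  (∀ j, (p j).degree = (j : WithBot ℕ)) ∧ (∀ j, 0 < (p j).leadingCoeff) ∧
    ∀ i j, ∫ x, (p i).eval x * (p j).eval x ∂μ = if i = j then 1 else 0

/-- All moments of `μ` are finite. -/
def HasAllMoments (μ : Measure ℝ) : Prop := ∀ k : ℕ, Integrable (fun x : ℝ => x ^ k) μ

/-- `μ` has infinite support: no finite set carries full `μ`-measure. -/
def InfiniteSupport (μ : Measure ℝ) : Prop := ∀ s : Finset ℝ, μ ((↑s : Set ℝ)ᶜ) ≠ 0

/-- The Christoffel–Darboux kernel `K_n(x,y) = ∑_{j<n} p_j(x) p_j(y)`. -/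
def CDKernel (p : ℕ → Polynomial ℝ) (n : ℕ) (x y : ℝ) : ℝ :=
  ∑ j ∈ Finset.range n, (p j).eval x * (p j).eval y

/-- The sup norm `‖f‖_∞` of a (bounded) function. -/
def supNorm (f : ℝ → ℝ) : ℝ := ⨆ x, |f x|

/-- The (topological) support of a measure on `ℝ`. -/
def measSupport (μ : Measure ℝ) : Set ℝ := {x | ∀ U ∈ 𝓝 x, μ U ≠ 0}

/-- The sine kernel `sin(πt)/(πt)` (equal to `1` at `t = 0`). -/
def sineKernel (t : ℝ) : ℝ := if t = 0 then 1 else Real.sin (Real.pi * t) / (Real.pi * t)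

/-- `K̃_n(x,y) = w(x)^{1/2} w(y)^{1/2} K_n(x,y)`, where `w` is the Radon–Nikodym
derivative of `μ` with respect to Lebesgue measure. -/
def tildeK (μ : Measure ℝ) (Kf : ℝ → ℝ → ℝ) (x y : ℝ) : ℝ :=
  Real.sqrt ((μ.rnDeriv volume x).toReal) * Real.sqrt ((μ.rnDeriv volume y).toReal) * Kf x y

/-- The Nevai condition at `x*` for a sequence of measures with kernels `Kf n`. -/
def NevaiCond (μ : ℕ → Measure ℝ) (Kf : ℕ → ℝ → ℝ → ℝ) (xs : ℝ) : Prop :=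
  ∀ f : ℝ → ℝ, Continuous f → HasCompactSupport f →
    Tendsto (fun n => ∫ y, (f y - f xs) * Kf n xs y ^ 2 / Kf n xs xs ∂(μ n)) atTop (𝓝 0)

/-- The `α`-Nevai condition at `x*` for a sequence of measures with kernels `Kf n`. -/
def AlphaNevaiCond (μ : ℕ → Measure ℝ) (Kf : ℕ → ℝ → ℝ → ℝ) (α xs : ℝ) : Prop :=
  ∀ f : ℝ → ℝ, Continuous f → HasCompactSupport f →
    ∀ S : Set ℝ, IsCompact S →
      TendstoUniformlyOn
        (fun n s => ∫ y, (f s - f ((n : ℝ) ^ α * (y - xs))) *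
            Kf n (xs + s / (n : ℝ) ^ α) y ^ 2 /
            Kf n (xs + s / (n : ℝ) ^ α) (xs + s / (n : ℝ) ^ α) ∂(μ n))
        (fun _ => 0) atTop S

/-- A polynomial is integrable against a measure with all moments finite. -/
lemma integrable_polyEval (μ : Measure ℝ) (hmom : HasAllMoments μ) (P : Polynomial ℝ) :
    Integrable (fun x => P.eval x) μ := by
  have h : (fun x : ℝ => P.eval x)
      = fun x => ∑ i ∈ Finset.range (P.natDegree + 1), P.coeff i * x ^ i := by
    funext x; exact Polynomial.eval_eq_sum_range x
  rw [h]
  exact integrable_finset_sum _ (fun i _ => (hmom i).const_mul _)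

/-- The square of the CD kernel (in one variable) is integrable. -/
lemma integrable_CDKernel_sq (μ : Measure ℝ) (hmom : HasAllMoments μ) (p : ℕ → Polynomial ℝ)
    (n : ℕ) (x : ℝ) : Integrable (fun y => CDKernel p n x y ^ 2) μ := by
  have h : (fun y => CDKernel p n x y ^ 2)
      = fun y => ((∑ j ∈ Finset.range n, Polynomial.C ((p j).eval x) * p j) ^ 2).eval y := by
    funext y
    simp [CDKernel, Polynomial.eval_finset_sum]
  rw [h]
  exact integrable_polyEval μ hmom _

/-- Reproducing property: `∫ K_n(x,y)^2 dμ(y) = K_n(x,x)`. -/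
lemma CDKernel_reproducing (μ : Measure ℝ) (hmom : HasAllMoments μ) (p : ℕ → Polynomial ℝ)
    (hp : IsOrthonormalPolys μ p) (n : ℕ) (x : ℝ) :
    ∫ y, CDKernel p n x y ^ 2 ∂μ = CDKernel p n x x := by
  have key : ∀ y, CDKernel p n x y ^ 2 = ∑ j ∈ Finset.range n, ∑ k ∈ Finset.range n,
      ((p j).eval x * (p k).eval x) * ((p j) * (p k)).eval y := by
    intro y
    rw [CDKernel, sq, Finset.sum_mul_sum]
    refine Finset.sum_congr rfl fun j _ => Finset.sum_congr rfl fun k _ => ?_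
    simp only [Polynomial.eval_mul]; ring
  simp only [key]
  rw [integral_finset_sum _ (fun j _ => integrable_finset_sum _
    (fun k _ => (integrable_polyEval μ hmom _).const_mul _))]
  have h2 : ∀ j ∈ Finset.range n,
      (∫ y, ∑ k ∈ Finset.range n, ((p j).eval x * (p k).eval x) * ((p j) * (p k)).eval y ∂μ)
        = (p j).eval x * (p j).eval x := by
    intro j hj
    rw [integral_finset_sum _ (fun k _ => (integrable_polyEval μ hmom _).const_mul _)]
    have h3 : ∀ k ∈ Finset.range n,
        (∫ y, ((p j).eval x * (p k).eval x) * ((p j) * (p k)).eval y ∂μ)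
          = ((p j).eval x * (p k).eval x) * (if j = k then 1 else 0) := by
      intro k _
      rw [MeasureTheory.integral_const_mul]
      congr 1
      have := hp.2.2 j k
      simpa [Polynomial.eval_mul] using this
    rw [Finset.sum_congr rfl h3]
    simp [Finset.sum_ite_eq, hj]
  rw [Finset.sum_congr rfl h2]
  rfl

/-- The degree-zero orthonormal polynomial is identically 1. -/
lemma p_zero_eval (μ : Measure ℝ) [IsProbabilityMeasure μ] (p : ℕ → Polynomial ℝ)
    (hp : IsOrthonormalPolys μ p) (x : ℝ) : (p 0).eval x = 1 := by
  have hdeg : (p 0).degree ≤ 0 := le_of_eq (by simpa using hp.1 0)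
  have hc : p 0 = Polynomial.C ((p 0).coeff 0) := Polynomial.eq_C_of_degree_le_zero hdeg
  set c := (p 0).coeff 0 with hcdef
  have horth := hp.2.2 0 0
  rw [hc] at horth
  simp only [Polynomial.eval_C, if_pos rfl] at horth
  rw [integral_const] at horth
  simp [measure_univ] at horth
  have hlc : 0 < c := by
    have := hp.2.1 0
    rwa [hc, Polynomial.leadingCoeff_C] at this
  have : c = 1 := by nlinarith
  rw [hc, Polynomial.eval_C, this]

/-- For `n ≥ 1`, the diagonal of the CD kernel is at least 1. -/
lemma CDKernel_diag_ge_one (μ : Measure ℝ) [IsProbabilityMeasure μ] (p : ℕ → Polynomial ℝ)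
    (hp : IsOrthonormalPolys μ p) {n : ℕ} (hn : 1 ≤ n) (x : ℝ) :
    1 ≤ CDKernel p n x x := by
  have h0 : (0 : ℕ) ∈ Finset.range n := Finset.mem_range.mpr hn
  have := Finset.single_le_sum (f := fun j => (p j).eval x * (p j).eval x)
    (fun j _ => mul_self_nonneg _) h0
  simp only [p_zero_eval μ p hp x] at this
  simpa [CDKernel] using this

/-- **α-Nevai implies Nevai** (Proposition 5.2): if a sequence of measures satisfies the
`α`-Nevai condition at `x*` for some `α > 0`, then it satisfies the Nevai condition at
`x*`. -/
theorem alphaNevai_implies_Nevai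
    (μ : ℕ → Measure ℝ) (hprob : ∀ n, IsProbabilityMeasure (μ n))
    (hinf : ∀ n, InfiniteSupport (μ n)) (hmom : ∀ n, HasAllMoments (μ n))
    (p : ℕ → ℕ → Polynomial ℝ) (hp : ∀ n, IsOrthonormalPolys (μ n) (p n))
    (xs : ℝ) (α : ℝ) (hα : 0 < α)
    (hNevai : AlphaNevaiCond μ (fun n => CDKernel (p n) n) α xs) :
    NevaiCond μ (fun n => CDKernel (p n) n) xs := by
  intro f hf hfc
  obtain ⟨C, hC⟩ := hfc.exists_bound_of_continuous hf
  have hC0 : (0:ℝ) ≤ C := le_trans (norm_nonneg _) (hC 0)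
  simp only [Real.norm_eq_abs] at hC
  -- bump function equal to 1 on [-1,1], supported in [-2,2]
  set g : ℝ → ℝ := fun t => max 0 (min 1 (2 - |t|)) with hgdef
  have hg_cont : Continuous g :=
    continuous_const.max (continuous_const.min (continuous_const.sub continuous_abs))
  have hg_le_one : ∀ t, g t ≤ 1 := fun t => max_le (by norm_num) (min_le_left _ _)
  have hg_nonneg : ∀ t, 0 ≤ g t := fun t => le_max_left _ _
  have hg0 : g 0 = 1 := by simp [hgdef]
  have hg_zero : ∀ t : ℝ, 2 ≤ |t| → g t = 0 := by
    intro t ht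
    have h1 : min 1 (2 - |t|) ≤ 0 := le_trans (min_le_right _ _) (by linarith)
    simp only [hgdef]
    exact max_eq_left h1
  have hg_supp : HasCompactSupport g := by
    apply HasCompactSupport.intro (isCompact_Icc (a := (-2:ℝ)) (b := 2))
    intro t ht
    apply hg_zero
    rw [Set.mem_Icc, ← abs_le] at ht
    exact (not_le.mp ht).le
  -- the α-Nevai condition at s = 0
  have hT : Tendsto (fun n => ∫ y, (1 - g ((n:ℝ)^α * (y - xs))) *
      CDKernel (p n) n xs y ^ 2 / CDKernel (p n) n xs xs ∂(μ n)) atTop (𝓝 0) := by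
    have h := (hNevai g hg_cont hg_supp {0} isCompact_singleton).tendsto_at
      (Set.mem_singleton (0:ℝ))
    simpa [hg0] using h
  rw [NormedAddCommGroup.tendsto_nhds_zero]
  intro ε hε
  have hfu : UniformContinuous f := hfc.uniformContinuous_of_continuous hf
  obtain ⟨δ, hδpos, hδ⟩ := Metric.uniformContinuous_iff.mp hfu (ε/2) (by positivity)
  have hpow : Tendsto (fun n : ℕ => (n:ℝ)^α) atTop atTop :=
    (tendsto_rpow_atTop hα).comp tendsto_natCast_atTop_atTop
  have E2 : ∀ᶠ n : ℕ in atTop, 2/δ ≤ (n:ℝ)^α := hpow.eventually_ge_atTop _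
  have E3 : ∀ᶠ n : ℕ in atTop, ‖(2*C) * (∫ y, (1 - g ((n:ℝ)^α * (y - xs))) *
      CDKernel (p n) n xs y ^ 2 / CDKernel (p n) n xs xs ∂(μ n))‖ < ε/2 := by
    have h := hT.const_mul (2*C)
    rw [mul_zero] at h
    exact (NormedAddCommGroup.tendsto_nhds_zero.mp h) (ε/2) (by positivity)
  filter_upwards [eventually_ge_atTop 1, E2, E3] with n hn1 hn2 hn3
  haveI := hprob n
  set Kd := CDKernel (p n) n xs xs with hKddef
  have hKd1 : 1 ≤ Kd := CDKernel_diag_ge_one (μ n) (p n) (hp n) hn1 xs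
  have hKd0 : (0:ℝ) < Kd := lt_of_lt_of_le one_pos hKd1
  have hint1 : Integrable (fun y => CDKernel (p n) n xs y ^ 2) (μ n) :=
    integrable_CDKernel_sq (μ n) (hmom n) (p n) n xs
  have hint2 : Integrable (fun y => CDKernel (p n) n xs y ^ 2 / Kd) (μ n) := hint1.div_const _
  -- pointwise bound
  have hbound : ∀ y, |(f y - f xs) * CDKernel (p n) n xs y ^ 2 / Kd|
      ≤ (ε/2 + 2*C*(1 - g ((n:ℝ)^α * (y - xs)))) * (CDKernel (p n) n xs y ^ 2 / Kd) := by
    intro y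
    have hKnn : 0 ≤ CDKernel (p n) n xs y ^ 2 / Kd := div_nonneg (sq_nonneg _) hKd0.le
    have habs : |(f y - f xs) * CDKernel (p n) n xs y ^ 2 / Kd|
        = |f y - f xs| * (CDKernel (p n) n xs y ^ 2 / Kd) := by
      rw [abs_div, abs_mul, abs_pow, sq_abs, abs_of_pos hKd0, mul_div_assoc]
    rw [habs]
    apply mul_le_mul_of_nonneg_right _ hKnn
    by_cases hy : |y - xs| < δ
    · have h1 : |f y - f xs| < ε/2 := by
        have := hδ (a := y) (b := xs) (by rwa [Real.dist_eq])
        rwa [Real.dist_eq] at this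
      have h2 : 0 ≤ 2*C*(1 - g ((n:ℝ)^α * (y - xs))) := by
        have := hg_le_one ((n:ℝ)^α * (y - xs))
        have : 0 ≤ 1 - g ((n:ℝ)^α * (y - xs)) := by linarith
        positivity
      linarith
    · have hya : δ ≤ |y - xs| := not_lt.mp hy
      have hgz : g ((n:ℝ)^α * (y - xs)) = 0 := by
        apply hg_zero
        rw [abs_mul, abs_of_nonneg (Real.rpow_nonneg (Nat.cast_nonneg n) α)]
        calc (2:ℝ) = (2/δ) * δ := by field_simp
          _ ≤ (n:ℝ)^α * |y - xs| :=
            mul_le_mul hn2 hya hδpos.le (le_trans (by positivity) hn2)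
      rw [hgz]
      have hy1 := hC y
      have hy2 := hC xs
      have := norm_sub_le (f y) (f xs)
      simp only [Real.norm_eq_abs] at this
      linarith
  -- integrability of both sides
  have hmeas_g : AEStronglyMeasurable
      (fun y : ℝ => (1 : ℝ) - g ((n:ℝ)^α * (y - xs))) (μ n) :=
    (continuous_const.sub (hg_cont.comp
      (continuous_const.mul (continuous_id.sub continuous_const)))).aestronglyMeasurable
  have hint3 : Integrable
      (fun y => (1 - g ((n:ℝ)^α * (y - xs))) * (CDKernel (p n) n xs y ^ 2 / Kd)) (μ n) :=
    hint2.bdd_mul hmeas_g (c := 1) (ae_of_all _ fun y => by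
      rw [Real.norm_eq_abs, abs_of_nonneg (by linarith [hg_le_one ((n:ℝ)^α * (y - xs))])]
      linarith [hg_nonneg ((n:ℝ)^α * (y - xs))])
  have hint4 : Integrable
      (fun y => |(f y - f xs) * CDKernel (p n) n xs y ^ 2 / Kd|) (μ n) := by
    have h : Integrable (fun y => (f y - f xs) * (CDKernel (p n) n xs y ^ 2 / Kd)) (μ n) :=
      hint2.bdd_mul ((hf.sub continuous_const).aestronglyMeasurable) (c := 2*C) (ae_of_all _ fun y => by
        rw [Real.norm_eq_abs]
        have := norm_sub_le (f y) (f xs)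
        simp only [Real.norm_eq_abs] at this
        have hy1 := hC y
        have hy2 := hC xs
        linarith)
    simpa [mul_div_assoc] using h.abs
  have hsplit : (fun y => (ε/2 + 2*C*(1 - g ((n:ℝ)^α * (y - xs)))) *
      (CDKernel (p n) n xs y ^ 2 / Kd))
      = fun y => (ε/2) * (CDKernel (p n) n xs y ^ 2 / Kd)
          + (2*C) * ((1 - g ((n:ℝ)^α * (y - xs))) * (CDKernel (p n) n xs y ^ 2 / Kd)) := by
    funext y; ring
  have hint5 : Integrable (fun y => (ε/2 + 2*C*(1 - g ((n:ℝ)^α * (y - xs)))) *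
      (CDKernel (p n) n xs y ^ 2 / Kd)) (μ n) := by
    rw [hsplit]
    exact (hint2.const_mul _).add (hint3.const_mul _)
  -- the integral of K^2/Kd is 1
  have hone : ∫ y, CDKernel (p n) n xs y ^ 2 / Kd ∂(μ n) = 1 := by
    rw [integral_div, CDKernel_reproducing (μ n) (hmom n) (p n) (hp n) n xs, ← hKddef,
      div_self hKd0.ne']
  -- identify T n
  have hTn : (∫ y, (1 - g ((n:ℝ)^α * (y - xs))) * (CDKernel (p n) n xs y ^ 2 / Kd) ∂(μ n))
      = ∫ y, (1 - g ((n:ℝ)^α * (y - xs))) *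
          CDKernel (p n) n xs y ^ 2 / CDKernel (p n) n xs xs ∂(μ n) := by
    simp_rw [mul_div_assoc]
    rfl
  have hTabs : (2*C) * (∫ y, (1 - g ((n:ℝ)^α * (y - xs))) *
      (CDKernel (p n) n xs y ^ 2 / Kd) ∂(μ n)) < ε/2 := by
    rw [hTn]
    have h := hn3
    rw [Real.norm_eq_abs] at h
    exact lt_of_le_of_lt (le_abs_self _) h
  calc ‖∫ y, (f y - f xs) * CDKernel (p n) n xs y ^ 2 / Kd ∂(μ n)‖
      ≤ ∫ y, ‖(f y - f xs) * CDKernel (p n) n xs y ^ 2 / Kd‖ ∂(μ n) :=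
        norm_integral_le_integral_norm _
    _ = ∫ y, |(f y - f xs) * CDKernel (p n) n xs y ^ 2 / Kd| ∂(μ n) := by
        simp only [Real.norm_eq_abs]
    _ ≤ ∫ y, (ε/2 + 2*C*(1 - g ((n:ℝ)^α * (y - xs)))) *
          (CDKernel (p n) n xs y ^ 2 / Kd) ∂(μ n) := integral_mono hint4 hint5 hbound
    _ = (ε/2) * (∫ y, CDKernel (p n) n xs y ^ 2 / Kd ∂(μ n))
          + (2*C) * (∫ y, (1 - g ((n:ℝ)^α * (y - xs))) *
              (CDKernel (p n) n xs y ^ 2 / Kd) ∂(μ n)) := by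
        rw [hsplit, integral_add (hint2.const_mul _) (hint3.const_mul _),
          MeasureTheory.integral_const_mul, MeasureTheory.integral_const_mul]
    _ < ε := by rw [hone]; linarith
end
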